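/- Let F : ℝ³ → ℝ³ be twice continuously differentiable with det(DF(x̂)) > 0 for all x̂, where DF denotes the Fréchet derivative of F, and let u : ℝ³ → ℝ³ be continuously differentiable. Define the covariant Piola pullback û : ℝ³ → ℝ³ by û(x̂) = (DF(x̂))ᵀ u(F(x̂)). Then for every x̂ ∈ ℝ³ it holds that (∇ × u)(F(x̂)) = (1 / det(DF(x̂))) · DF(x̂) (∇ × û)(x̂), where ∇ × v denotes the curl of a vector field v : ℝ³ → ℝ³, i.e., the vector field with components (∂₂v₃ − ∂₃v₂, ∂₃v₁ − ∂₁v₃, ∂₁v₂ − ∂₂v₁). -/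

import Mathlib

/-- Jacobian matrix of a map `F : ℝ³ → ℝ³` at a point. -/
noncomputable def jacobian3 (F : (Fin 3 → ℝ) → (Fin 3 → ℝ)) (x : Fin 3 → ℝ) :
    Matrix (Fin 3) (Fin 3) ℝ :=
  Matrix.of fun i j => fderiv ℝ F x (Pi.single j 1) i

/-- Partial derivative of a scalar function in the j-th coordinate direction. -/
noncomputable def pderiv3 (g : (Fin 3 → ℝ) → ℝ) (j : Fin 3) (x : Fin 3 → ℝ) : ℝ :=
  fderiv ℝ g x (Pi.single j 1)

/-- Curl of a vector field in ℝ³: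
∇ × v = (∂₂v₃ − ∂₃v₂, ∂₃v₁ − ∂₁v₃, ∂₁v₂ − ∂₂v₁). -/
noncomputable def curl3 (v : (Fin 3 → ℝ) → (Fin 3 → ℝ)) (x : Fin 3 → ℝ) : Fin 3 → ℝ :=
  ![pderiv3 (fun y => v y 2) 1 x - pderiv3 (fun y => v y 1) 2 x,
    pderiv3 (fun y => v y 0) 2 x - pderiv3 (fun y => v y 2) 0 x,
    pderiv3 (fun y => v y 1) 0 x - pderiv3 (fun y => v y 0) 1 x]

/-- Transformation of the curl under the covariant Piola mapping in 3D:
(∇ × u)(F(x̂)) = (1/det DF(x̂)) DF(x̂) (∇ × û)(x̂). -/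
theorem piola_curl_transform_3d
    (F : (Fin 3 → ℝ) → (Fin 3 → ℝ)) (hF : ContDiff ℝ 2 F)
    (hdet : ∀ x : Fin 3 → ℝ, 0 < (jacobian3 F x).det)
    (u : (Fin 3 → ℝ) → (Fin 3 → ℝ)) (hu : ContDiff ℝ 1 u)
    (uhat : (Fin 3 → ℝ) → (Fin 3 → ℝ))
    (huhat : ∀ x : Fin 3 → ℝ, uhat x = (jacobian3 F x).transpose.mulVec (u (F x))) :
    ∀ x : Fin 3 → ℝ,
      curl3 u (F x) = (1 / (jacobian3 F x).det) • (jacobian3 F x).mulVec (curl3 uhat x) := by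
  intro x
  have hFd : Differentiable ℝ F := hF.differentiable two_ne_zero
  have hud : Differentiable ℝ u := hu.differentiable one_ne_zero
  have hf'd : Differentiable ℝ (fderiv ℝ F) :=
    (hF.fderiv_right (m := 1) (by norm_num)).differentiable one_ne_zero
  set f'' := fderiv ℝ (fderiv ℝ F) x with hf''def
  have hsymm : ∀ v w, f'' v w = f'' w v :=
    second_derivative_symmetric (fun y => (hFd y).hasFDerivAt) (hf'd x).hasFDerivAt
  set A : Fin 3 → Fin 3 → ℝ := fun i j => fderiv ℝ F x (Pi.single j 1) i with hA
  set G : Fin 3 → Fin 3 → ℝ := fun j l => fderiv ℝ u (F x) (Pi.single l 1) j with hG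
  set H : Fin 3 → Fin 3 → Fin 3 → ℝ :=
    fun k i j => f'' (Pi.single k 1) (Pi.single i 1) j with hH
  have hHsymm : ∀ k i j, H k i j = H i k j := by
    intro k i j
    simp only [hH, hsymm]
  have hvec : ∀ v : Fin 3 → ℝ, v = v 0 • (Pi.single 0 1 : Fin 3 → ℝ)
      + v 1 • (Pi.single 1 1 : Fin 3 → ℝ) + v 2 • (Pi.single 2 1 : Fin 3 → ℝ) := by
    intro v; funext j; fin_cases j <;> simp [Pi.single_apply]
  -- pderiv of u components at F x
  have hG' : ∀ j l : Fin 3, pderiv3 (fun y => u y j) l (F x) = G j l := by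
    intro j l
    have h1 : HasFDerivAt (fun y => u y j)
        ((ContinuousLinearMap.proj (R := ℝ) (φ := fun _ : Fin 3 => ℝ) j).comp
          (fderiv ℝ u (F x))) (F x) :=
      (ContinuousLinearMap.proj j : (Fin 3 → ℝ) →L[ℝ] ℝ).hasFDerivAt.comp (F x)
        (hud (F x)).hasFDerivAt
    simp [pderiv3, h1.fderiv, hG]
  -- value of fderiv u (F x) on image vectors
  have happ : ∀ j k : Fin 3, fderiv ℝ u (F x) (fderiv ℝ F x (Pi.single k 1)) j
      = G j 0 * A 0 k + G j 1 * A 1 k + G j 2 * A 2 k := by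
    intro j k
    conv_lhs => rw [hvec (fderiv ℝ F x (Pi.single k 1))]
    simp only [map_add, map_smul, Pi.add_apply, Pi.smul_apply, smul_eq_mul, hA, hG]
    ring
  -- main derivative computation for uhat components
  have key : ∀ i k : Fin 3, pderiv3 (fun y => uhat y i) k x =
      (H k i 0 * u (F x) 0 + A 0 i * (G 0 0 * A 0 k + G 0 1 * A 1 k + G 0 2 * A 2 k))
      + (H k i 1 * u (F x) 1 + A 1 i * (G 1 0 * A 0 k + G 1 1 * A 1 k + G 1 2 * A 2 k))
      + (H k i 2 * u (F x) 2 + A 2 i * (G 2 0 * A 0 k + G 2 1 * A 1 k + G 2 2 * A 2 k)) := by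
    intro i k
    have hfun : (fun y => uhat y i) = fun y =>
        fderiv ℝ F y (Pi.single i 1) 0 * u (F y) 0
        + fderiv ℝ F y (Pi.single i 1) 1 * u (F y) 1
        + fderiv ℝ F y (Pi.single i 1) 2 * u (F y) 2 := by
      funext y
      rw [huhat y]
      simp [Matrix.mulVec, dotProduct, jacobian3, Matrix.transpose_apply,
        Fin.sum_univ_three]
    have hc : ∀ j : Fin 3, HasFDerivAt (fun y => fderiv ℝ F y (Pi.single i 1) j)
        (((ContinuousLinearMap.proj (R := ℝ) (φ := fun _ : Fin 3 => ℝ) j).comp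
          (ContinuousLinearMap.apply ℝ (Fin 3 → ℝ) (Pi.single i 1))).comp f'') x := by
      intro j
      exact ((ContinuousLinearMap.proj j : (Fin 3 → ℝ) →L[ℝ] ℝ).comp
        (ContinuousLinearMap.apply ℝ (Fin 3 → ℝ) (Pi.single i 1))).hasFDerivAt.comp x
        (hf'd x).hasFDerivAt
    have hd : ∀ j : Fin 3, HasFDerivAt (fun y => u (F y) j)
        ((ContinuousLinearMap.proj (R := ℝ) (φ := fun _ : Fin 3 => ℝ) j).comp
          ((fderiv ℝ u (F x)).comp (fderiv ℝ F x))) x := by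
      intro j
      exact (ContinuousLinearMap.proj j : (Fin 3 → ℝ) →L[ℝ] ℝ).hasFDerivAt.comp x
        (((hud (F x)).hasFDerivAt).comp x (hFd x).hasFDerivAt)
    have hder : HasFDerivAt (fun y =>
        fderiv ℝ F y (Pi.single i 1) 0 * u (F y) 0
        + fderiv ℝ F y (Pi.single i 1) 1 * u (F y) 1
        + fderiv ℝ F y (Pi.single i 1) 2 * u (F y) 2) _ x := (((hc 0).mul (hd 0)).add ((hc 1).mul (hd 1))).add ((hc 2).mul (hd 2))
    rw [pderiv3, hfun, hder.fderiv]
    simp only [ContinuousLinearMap.add_apply, ContinuousLinearMap.smul_apply,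
      ContinuousLinearMap.comp_apply, ContinuousLinearMap.proj_apply,
      ContinuousLinearMap.apply_apply, smul_eq_mul]
    rw [happ 0 k, happ 1 k, happ 2 k]
    simp only [hA, hH, hf''def]
    ring
  have hdetne : (jacobian3 F x).det ≠ 0 := (hdet x).ne'
  have hJ : ∀ i j : Fin 3, jacobian3 F x i j = A i j := by
    intro i j; simp [jacobian3, hA]
  have hdetA : (jacobian3 F x).det = A 0 0 * A 1 1 * A 2 2 - A 0 0 * A 1 2 * A 2 1
      - A 0 1 * A 1 0 * A 2 2 + A 0 1 * A 1 2 * A 2 0 + A 0 2 * A 1 0 * A 2 1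
      - A 0 2 * A 1 1 * A 2 0 := by
    rw [Matrix.det_fin_three]; simp only [hJ]
  have hdetne' : A 0 0 * A 1 1 * A 2 2 - A 0 0 * A 1 2 * A 2 1 - A 0 1 * A 1 0 * A 2 2
      + A 0 1 * A 1 2 * A 2 0 + A 0 2 * A 1 0 * A 2 1 - A 0 2 * A 1 1 * A 2 0 ≠ 0 := by
    rw [← hdetA]; exact hdetne
  funext p
  fin_cases p
  · show curl3 u (F x) 0 = ((1 / (jacobian3 F x).det) • (jacobian3 F x).mulVec (curl3 uhat x)) 0
    simp only [curl3, Pi.smul_apply, Matrix.mulVec, dotProduct, Fin.sum_univ_three,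
      Matrix.cons_val_zero, Matrix.cons_val_one, Matrix.head_cons, Matrix.cons_val_two,
      Matrix.tail_cons, smul_eq_mul]
    simp only [hG', key, hJ, hdetA]
    rw [hHsymm 2 1 0, hHsymm 2 1 1, hHsymm 2 1 2, hHsymm 2 0 0, hHsymm 2 0 1, hHsymm 2 0 2,
      hHsymm 1 0 0, hHsymm 1 0 1, hHsymm 1 0 2]
    rw [one_div_mul_eq_div, eq_div_iff hdetne']
    ring
  · show curl3 u (F x) 1 = ((1 / (jacobian3 F x).det) • (jacobian3 F x).mulVec (curl3 uhat x)) 1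
    simp only [curl3, Pi.smul_apply, Matrix.mulVec, dotProduct, Fin.sum_univ_three,
      Matrix.cons_val_zero, Matrix.cons_val_one, Matrix.head_cons, Matrix.cons_val_two,
      Matrix.tail_cons, smul_eq_mul]
    simp only [hG', key, hJ, hdetA]
    rw [hHsymm 2 1 0, hHsymm 2 1 1, hHsymm 2 1 2, hHsymm 2 0 0, hHsymm 2 0 1, hHsymm 2 0 2,
      hHsymm 1 0 0, hHsymm 1 0 1, hHsymm 1 0 2]
    rw [one_div_mul_eq_div, eq_div_iff hdetne']
    ring
  · show curl3 u (F x) 2 = ((1 / (jacobian3 F x).det) • (jacobian3 F x).mulVec (curl3 uhat x)) 2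
    simp only [curl3, Pi.smul_apply, Matrix.mulVec, dotProduct, Fin.sum_univ_three,
      Matrix.cons_val_zero, Matrix.cons_val_one, Matrix.head_cons, Matrix.cons_val_two,
      Matrix.tail_cons, smul_eq_mul]
    simp only [hG', key, hJ, hdetA]
    rw [hHsymm 2 1 0, hHsymm 2 1 1, hHsymm 2 1 2, hHsymm 2 0 0, hHsymm 2 0 1, hHsymm 2 0 2,
      hHsymm 1 0 0, hHsymm 1 0 1, hHsymm 1 0 2]
    rw [one_div_mul_eq_div, eq_div_iff hdetne']
    ring
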